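/- arXiv:2304.13430 — 2 statements merged into one kernel-verified Lean document; each statement's English description precedes it below -/
import Mathlib

section
/- Let D be a definition. Every structure interpreting exactly the parameter symbols param(D) has a unique expansion interpreting in addition the defined predicates defp(D) that satisfies D as a definition. -/
/-- Terms over function symbols `Func` (with arities `arF`) and variables `V`. -/
inductive Term (Func : Type) (arF : Func → ℕ) (V : Type) : Type
  | var : V → Term Func arF V
  | func : (f : Func) → (Fin (arF f) → Term Func arF V) → Term Func arF V

/-
The vocabulary `Σ` of a definition `D` consists of:
* function symbols `Func` with arities `arF` (parameters of `D`),
* parameter predicate symbols `PP` with arities `arPP` (parameters of `D`),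
* defined predicate symbols `DP` with arities `arDP` (the predicates defined by `D`).
-/
variable {Func : Type} {arF : Func → ℕ} {PP : Type} {arPP : PP → ℕ}
  {DP : Type} {arDP : DP → ℕ}

/-- A body atom of a definitional rule: an atomic formula (over a defined or a parameter
predicate), `⊤`, `⊥`, or an equality/disequality atom between terms. -/
inductive BodyAtom (Func : Type) (arF : Func → ℕ) (PP : Type) (arPP : PP → ℕ)
    (DP : Type) (arDP : DP → ℕ) (V : Type) : Type
  | defAtom : (p : DP) → (Fin (arDP p) → Term Func arF V) → BodyAtom Func arF PP arPP DP arDP V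
  | parAtom : (q : PP) → (Fin (arPP q) → Term Func arF V) → BodyAtom Func arF PP arPP DP arDP V
  | verum : BodyAtom Func arF PP arPP DP arDP V
  | falsum : BodyAtom Func arF PP arPP DP arDP V
  | eq : Term Func arF V → Term Func arF V → BodyAtom Func arF PP arPP DP arDP V
  | neq : Term Func arF V → Term Func arF V → BodyAtom Func arF PP arPP DP arDP V

/-- A definitional rule `A ← B₁, …, Bₙ`: the head `A` is an atomic formula whose
predicate is a defined predicate, the body is a list of body atoms; all variables
(natural numbers) are implicitly universally quantified in front of the rule. -/
structure Rule (Func : Type) (arF : Func → ℕ) (PP : Type) (arPP : PP → ℕ)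
    (DP : Type) (arDP : DP → ℕ) : Type where
  headPred : DP
  headArgs : Fin (arDP headPred) → Term Func arF ℕ
  body : List (BodyAtom Func arF PP arPP DP arDP ℕ)

/-- A first-order structure interpreting the whole vocabulary `Σ`. -/
structure Struc (Func : Type) (arF : Func → ℕ) (PP : Type) (arPP : PP → ℕ)
    (DP : Type) (arDP : DP → ℕ) : Type 1 where
  carrier : Type
  nonempty : Nonempty carrier
  interpF : (f : Func) → (Fin (arF f) → carrier) → carrier
  interpPP : (q : PP) → (Fin (arPP q) → carrier) → Prop
  interpDP : (p : DP) → (Fin (arDP p) → carrier) → Prop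

/-- Evaluation of a term in a structure under a variable assignment. -/
def Term.eval (M : Struc Func arF PP arPP DP arDP) {V : Type} (σ : V → M.carrier) :
    Term Func arF V → M.carrier
  | .var v => σ v
  | .func f args => M.interpF f fun i => (args i).eval M σ

/-- Truth of a body atom in a structure under an assignment. -/
def BodyAtom.holds (M : Struc Func arF PP arPP DP arDP) {V : Type} (σ : V → M.carrier) :
    BodyAtom Func arF PP arPP DP arDP V → Prop
  | .defAtom p args => M.interpDP p fun i => (args i).eval M σ
  | .parAtom q args => M.interpPP q fun i => (args i).eval M σ
  | .verum => True
  | .falsum => False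
  | .eq s t => s.eval M σ = t.eval M σ
  | .neq s t => s.eval M σ ≠ t.eval M σ

/-- A structure satisfies a rule as a first-order implication: the universal closure of
`B₁ ∧ ⋯ ∧ Bₙ → A`. -/
def Rule.holds (M : Struc Func arF PP arPP DP arDP)
    (r : Rule Func arF PP arPP DP arDP) : Prop :=
  ∀ σ : ℕ → M.carrier, (∀ b ∈ r.body, b.holds M σ) →
    M.interpDP r.headPred fun i => (r.headArgs i).eval M σ

/-- `M` satisfies all rules of the definition `D` as first-order implications. -/
def SatRules (M : Struc Func arF PP arPP DP arDP)
    (D : Set (Rule Func arF PP arPP DP arDP)) : Prop :=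
  ∀ r ∈ D, r.holds M

/-- `M` satisfies `D` as a definition (`M ⊨_D D`): `M` satisfies every rule of `D` as a
first-order implication, and for every structure `N` with the same universe and the same
interpretations of all parameter symbols (function symbols and parameter predicates)
that satisfies every rule of `D` as an implication, `p^M ⊆ p^N` for every defined
predicate `p`. -/
def SatDef (D : Set (Rule Func arF PP arPP DP arDP))
    (M : Struc Func arF PP arPP DP arDP) : Prop :=
  SatRules M D ∧
    ∀ IDP : (p : DP) → (Fin (arDP p) → M.carrier) → Prop,
      SatRules ⟨M.carrier, M.nonempty, M.interpF, M.interpPP, IDP⟩ D →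
        ∀ p args, M.interpDP p args → IDP p args

/-- A structure interpreting exactly the parameter symbols `param(D)`: the function
symbols and the parameter predicates. -/
structure PStruc (Func : Type) (arF : Func → ℕ) (PP : Type) (arPP : PP → ℕ) : Type 1 where
  carrier : Type
  nonempty : Nonempty carrier
  interpF : (f : Func) → (Fin (arF f) → carrier) → carrier
  interpPP : (q : PP) → (Fin (arPP q) → carrier) → Prop

/-- The expansion of a parameter structure `M₀` by an interpretation `I` of the defined
predicates: it has the same universe and agrees with `M₀` on all symbols `M₀` interprets. -/
def PStruc.expand (M₀ : PStruc Func arF PP arPP)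
    (I : (p : DP) → (Fin (arDP p) → M₀.carrier) → Prop) :
    Struc Func arF PP arPP DP arDP :=
  ⟨M₀.carrier, M₀.nonempty, M₀.interpF, M₀.interpPP, I⟩

theorem eval_expand (M₀ : PStruc Func arF PP arPP)
    (I J : (p : DP) → (Fin (arDP p) → M₀.carrier) → Prop)
    (σ : ℕ → M₀.carrier) (t : Term Func arF ℕ) :
    Term.eval (M₀.expand I) σ t = Term.eval (M₀.expand J) σ t := by
  induction t with
  | var v => rfl
  | func f args ih => simp only [Term.eval]; exact congrArg _ (funext fun i => ih i)

/-- Every structure interpreting exactly the parameter symbols `param(D)`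
has a unique expansion interpreting in addition the defined predicates `defp(D)` that
satisfies `D` as a definition. -/
theorem statement_1 (D : Set (Rule Func arF PP arPP DP arDP))
    (M₀ : PStruc Func arF PP arPP) :
    ∃! I : (p : DP) → (Fin (arDP p) → M₀.carrier) → Prop,
      SatDef D (M₀.expand I) := by
  classical
  set I₀ : (p : DP) → (Fin (arDP p) → M₀.carrier) → Prop :=
    fun p args => ∀ J : (p : DP) → (Fin (arDP p) → M₀.carrier) → Prop,
      SatRules (M₀.expand J) D → J p args with hI₀
  have hmono : ∀ (J : (p : DP) → (Fin (arDP p) → M₀.carrier) → Prop),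
      SatRules (M₀.expand J) D →
      ∀ (σ : ℕ → M₀.carrier) (b : BodyAtom Func arF PP arPP DP arDP ℕ),
        b.holds (M₀.expand I₀) σ → b.holds (M₀.expand J) σ := by
    intro J hJ σ b hb
    cases b with
    | defAtom p args =>
        have h : I₀ p (fun i => (args i).eval (M₀.expand I₀) σ) := hb
        have := h J hJ
        simp only [BodyAtom.holds, eval_expand M₀ J I₀] at this ⊢; exact this
    | parAtom q args =>
        simp only [BodyAtom.holds, eval_expand M₀ J I₀] at hb ⊢; exact hb
    | verum => trivial
    | falsum => exact hb
    | eq s t =>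
        simp only [BodyAtom.holds, eval_expand M₀ J I₀] at hb ⊢; exact hb
    | neq s t =>
        simp only [BodyAtom.holds, eval_expand M₀ J I₀] at hb ⊢; exact hb
  have hsat : SatRules (M₀.expand I₀) D := by
    intro r hr σ hbody
    intro J hJ
    have := hJ r hr σ (fun b hb => hmono J hJ σ b (hbody b hb))
    exact (congrArg (J r.headPred) (funext fun i => eval_expand M₀ J I₀ σ (r.headArgs i))).mp this
  refine ⟨I₀, ⟨hsat, ?_⟩, ?_⟩
  · intro IDP hIDP p args h
    exact h IDP hIDP
  · intro I' ⟨hI'sat, hI'min⟩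
    funext p args
    apply propext
    constructor
    · intro h
      exact fun J hJ => hI'min J hJ p args h
    · intro h
      exact h I' hI'sat
end

section
/- Let D be a definition and M₀ a structure interpreting the parameter symbols param(D). The immediate consequence operator T_D — mapping each tuple of interpretations of the defined predicates over the universe of M₀ to the tuple collecting, for each defined predicate p, all tuples d such that some rule of D with head p(t₁,…,tₖ) has a variable assignment making its body true (evaluating parameters in M₀ and defined predicates in the given tuple) and making (t₁,…,tₖ) evaluate to d — is monotone with respect to componentwise inclusion, and its least fixed point is exactly the tuple of interpretations of the defined predicates in the unique expansion of M₀ that satisfies D as a definition. -/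
/-
The vocabulary `Σ` of a definition `D` consists of:
* function symbols `Func` with arities `arF` (parameters of `D`),
* parameter predicate symbols `PP` with arities `arPP` (parameters of `D`),
* defined predicate symbols `DP` with arities `arDP` (the predicates defined by `D`).
-/
variable {Func : Type} {arF : Func → ℕ} {PP : Type} {arPP : PP → ℕ}
  {DP : Type} {arDP : DP → ℕ}

/-- The immediate consequence operator `T_D` of the definition `D` in the context of the
parameter structure `M₀`: it maps a tuple `I` of interpretations of the defined
predicates to the tuple collecting, for each defined predicate `p`, all tuples `d` such
that some rule of `D` with head `p(t₁,…,tₖ)` has a variable assignment making its body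
true (parameters evaluated in `M₀`, defined predicates in `I`) and making `(t₁,…,tₖ)`
evaluate to `d`.  (The order on interpretation tuples is componentwise inclusion,
i.e. the pointwise order on `(p : DP) → (Fin (arDP p) → M₀.carrier) → Prop`.) -/
def TD (D : Set (Rule Func arF PP arPP DP arDP)) (M₀ : PStruc Func arF PP arPP)
    (I : (p : DP) → (Fin (arDP p) → M₀.carrier) → Prop) :
    (p : DP) → (Fin (arDP p) → M₀.carrier) → Prop :=
  fun p d =>
    ∃ r ∈ D, ∃ σ : ℕ → M₀.carrier,
      (∀ b ∈ r.body, BodyAtom.holds (M₀.expand I) σ b) ∧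
      (⟨r.headPred, fun i => (r.headArgs i).eval (M₀.expand I) σ⟩ :
          (q : DP) × (Fin (arDP q) → M₀.carrier)) = ⟨p, d⟩

lemma eval_expand_eq (M₀ : PStruc Func arF PP arPP)
    (I J : (p : DP) → (Fin (arDP p) → M₀.carrier) → Prop)
    (σ : ℕ → M₀.carrier) : ∀ t : Term Func arF ℕ,
    Term.eval (M₀.expand I) σ t = Term.eval (M₀.expand J) σ t := by
  intro t
  induction t with
  | var v => rfl
  | func f args ih => simp only [Term.eval]; exact congrArg _ (funext ih)

lemma bodyAtom_mono (M₀ : PStruc Func arF PP arPP)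
    {I J : (p : DP) → (Fin (arDP p) → M₀.carrier) → Prop} (h : I ≤ J)
    (σ : ℕ → M₀.carrier) (b : BodyAtom Func arF PP arPP DP arDP ℕ)
    (hb : BodyAtom.holds (M₀.expand I) σ b) : BodyAtom.holds (M₀.expand J) σ b := by
  cases b with
  | defAtom p args =>
      have := h p _ hb
      simp only [BodyAtom.holds, eval_expand_eq M₀ I J σ] at hb ⊢; exact h p _ hb
  | parAtom q args =>
      simp only [BodyAtom.holds, eval_expand_eq M₀ I J σ] at hb ⊢; exact hb
  | verum => trivial
  | falsum => exact hb
  | eq s t => simp only [BodyAtom.holds, eval_expand_eq M₀ I J σ] at hb ⊢; exact hb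
  | neq s t => simp only [BodyAtom.holds, eval_expand_eq M₀ I J σ] at hb ⊢; exact hb

lemma td_mono (D : Set (Rule Func arF PP arPP DP arDP)) (M₀ : PStruc Func arF PP arPP) :
    Monotone (TD D M₀) := by
  intro I J h p d hd
  obtain ⟨r, hr, σ, hbody, hhead⟩ := hd
  refine ⟨r, hr, σ, fun b hb => bodyAtom_mono M₀ h σ b (hbody b hb), ?_⟩
  rw [← hhead]
  congr 1
  exact funext fun i => (eval_expand_eq M₀ J I σ (r.headArgs i))

lemma td_le_iff_satRules (D : Set (Rule Func arF PP arPP DP arDP))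
    (M₀ : PStruc Func arF PP arPP)
    (I : (p : DP) → (Fin (arDP p) → M₀.carrier) → Prop) :
    TD D M₀ I ≤ I ↔ SatRules (M₀.expand I) D := by
  constructor
  · intro h r hr σ hbody
    exact h r.headPred _ ⟨r, hr, σ, hbody, rfl⟩
  · intro h p d hd
    obtain ⟨r, hr, σ, hbody, hhead⟩ := hd
    have := h r hr σ hbody
    obtain ⟨h1, h2⟩ := Sigma.mk.inj_iff.mp hhead
    subst h1
    rw [eq_of_heq h2] at this
    exact this

/-- the immediate consequence operator `T_D` is monotone w.r.t.
componentwise inclusion, and its least fixed point is exactly the tuple of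
interpretations of the defined predicates in the unique expansion of `M₀` that
satisfies `D` as a definition. -/
theorem statement_11 (D : Set (Rule Func arF PP arPP DP arDP))
    (M₀ : PStruc Func arF PP arPP) :
    Monotone (TD D M₀) ∧
    ∃ I : (p : DP) → (Fin (arDP p) → M₀.carrier) → Prop,
      SatDef D (M₀.expand I) ∧
      (∀ J, SatDef D (M₀.expand J) → J = I) ∧
      IsLeast (Function.fixedPoints (TD D M₀)) I := by
  set f : ((p : DP) → (Fin (arDP p) → M₀.carrier) → Prop) →o
      ((p : DP) → (Fin (arDP p) → M₀.carrier) → Prop) := ⟨TD D M₀, td_mono D M₀⟩ with hf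
  refine ⟨td_mono D M₀, OrderHom.lfp f, ?_, ?_, ?_⟩
  · constructor
    · exact (td_le_iff_satRules D M₀ _).mp (le_of_eq (OrderHom.map_lfp f))
    · intro J hJ
      have : TD D M₀ J ≤ J := (td_le_iff_satRules D M₀ J).mpr hJ
      exact OrderHom.lfp_le f this
  · intro J hJ
    have h1 : OrderHom.lfp f ≤ J := OrderHom.lfp_le f ((td_le_iff_satRules D M₀ J).mpr hJ.1)
    have h2 : J ≤ OrderHom.lfp f :=
      hJ.2 _ ((td_le_iff_satRules D M₀ _).mp (le_of_eq (OrderHom.map_lfp f)))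
    exact le_antisymm h2 h1
  · exact OrderHom.isLeast_lfp f
end
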